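/- Let ρ be a density matrix on ℂ^D and let σ = Σ_{i=1}^{N} p_i |ψ_i⟩⟨ψ_i| where ψ_1,…,ψ_N are unit vectors in ℂ^D and p_i ≥ 0 with Σ_i p_i = 1. Then F(ρ, σ) ≤ N · max_{1≤i≤N} F(ρ, |ψ_i⟩⟨ψ_i|). -/

import Mathlib

open Matrix MeasureTheory
open scoped Kronecker ComplexOrder

noncomputable section

/-- The positive semidefinite square root of a matrix (junk value `0` if not PSD). -/
def matSqrt {ι : Type*} [Fintype ι] [DecidableEq ι] (A : Matrix ι ι ℂ) : Matrix ι ι ℂ :=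
  open Classical in if h : A.PosSemidef then
    (h.1.eigenvectorUnitary : Matrix ι ι ℂ) *
      diagonal ((↑) ∘ (Real.sqrt ·) ∘ h.1.eigenvalues) * (star h.1.eigenvectorUnitary : Matrix ι ι ℂ)
  else 0

/-- The matrix absolute value `|X| = √(XᴴX)`. -/
def matAbs {ι : Type*} [Fintype ι] [DecidableEq ι] (X : Matrix ι ι ℂ) : Matrix ι ι ℂ :=
  matSqrt (Xᴴ * X)

/-- Uhlmann fidelity `F(ρ,σ) = (Tr|√ρ√σ|)²`. -/
def fid {ι : Type*} [Fintype ι] [DecidableEq ι] (ρ σ : Matrix ι ι ℂ) : ℝ :=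
  ((matAbs (matSqrt ρ * matSqrt σ)).trace).re ^ 2

/-- A density matrix: positive semidefinite with unit trace. -/
def IsDensity {ι : Type*} [Fintype ι] [DecidableEq ι] (ρ : Matrix ι ι ℂ) : Prop :=
  ρ.PosSemidef ∧ ρ.trace = 1

/-- The rank-one projector `|ψ⟩⟨ψ|`. -/
def ketbra {ι : Type*} (ψ : ι → ℂ) : Matrix ι ι ℂ := Matrix.vecMulVec ψ (star ψ)

/-- The `l`-fold tensor power of a matrix on `ℂ^d`, acting on `(ℂ^d)^{⊗l}`. -/
def tpow {d : ℕ} (M : Matrix (Fin d) (Fin d) ℂ) (l : ℕ) :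
    Matrix (Fin l → Fin d) (Fin l → Fin d) ℂ :=
  Matrix.of fun f g => ∏ i, M (f i) (g i)

/-- Loewner order: `A ⪯ B` iff `B - A` is positive semidefinite. -/
def loewnerLE {ι : Type*} [Fintype ι] (A B : Matrix ι ι ℂ) : Prop := (B - A).PosSemidef

/-- Projector onto the symmetric subspace of `(ℂ^d)^{⊗l}`:
`(1/l!) Σ_{π ∈ S_l} U_π` where `U_π` permutes the tensor factors. -/
def symProj (d l : ℕ) : Matrix (Fin l → Fin d) (Fin l → Fin d) ℂ :=
  (l.factorial : ℂ)⁻¹ •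
    ∑ π : Equiv.Perm (Fin l), Matrix.of fun f g => if f = (fun i => g (π i)) then (1 : ℂ) else 0


section AuxLemmas

variable {ι : Type*} [Fintype ι] [DecidableEq ι]

lemma matSqrt_eq {A : Matrix ι ι ℂ} (hA : A.PosSemidef) : matSqrt A = cfc Real.sqrt A := by
  rw [matSqrt, dif_pos hA, hA.1.cfc_eq, IsHermitian.cfc, Unitary.conjStarAlgAut_apply]; rfl

open scoped MatrixOrder in
lemma matSqrt_posSemidef {A : Matrix ι ι ℂ} (hA : A.PosSemidef) : (matSqrt A).PosSemidef := by
  rw [matSqrt_eq hA]; exact (cfc_nonneg (fun x _ => Real.sqrt_nonneg x)).posSemidef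

open scoped MatrixOrder in
lemma matSqrt_mul_self {A : Matrix ι ι ℂ} (hA : A.PosSemidef) : matSqrt A * matSqrt A = A := by
  rw [matSqrt_eq hA, ← cfc_mul Real.sqrt Real.sqrt A]
  conv_rhs => rw [← cfc_id' ℝ A]
  exact cfc_congr fun x hx => Real.mul_self_sqrt (spectrum_nonneg_of_nonneg hA.nonneg hx)

open scoped MatrixOrder in
lemma matSqrt_eq_of_sq {A B : Matrix ι ι ℂ} (hA : A.PosSemidef) (hB : B.PosSemidef)
    (h : B * B = A) : matSqrt A = B := by
  rw [(CFC.sqrt_unique (matSqrt_mul_self hA) (matSqrt_posSemidef hA).nonneg).symm]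
  exact CFC.sqrt_unique h hB.nonneg

lemma rank_matSqrt {A : Matrix ι ι ℂ} (hA : A.PosSemidef) : (matSqrt A).rank = A.rank := by
  have h := Matrix.rank_conjTranspose_mul_self (matSqrt A)
  rw [(matSqrt_posSemidef hA).isHermitian.eq, matSqrt_mul_self hA] at h
  exact h.symm

lemma matAbs_posSemidef (X : Matrix ι ι ℂ) : (matAbs X).PosSemidef :=
  matSqrt_posSemidef (Matrix.posSemidef_conjTranspose_mul_self X)

lemma matAbs_mul_self (X : Matrix ι ι ℂ) : matAbs X * matAbs X = Xᴴ * X :=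
  matSqrt_mul_self (Matrix.posSemidef_conjTranspose_mul_self X)

lemma rank_matAbs (X : Matrix ι ι ℂ) : (matAbs X).rank = X.rank := by
  rw [matAbs, rank_matSqrt (Matrix.posSemidef_conjTranspose_mul_self X),
    Matrix.rank_conjTranspose_mul_self]

lemma trace_eq_sum_eigs {A : Matrix ι ι ℂ} (hA : A.IsHermitian) :
    A.trace = ((∑ i, hA.eigenvalues i : ℝ) : ℂ) := by
  have hU : star (hA.eigenvectorUnitary : Matrix ι ι ℂ) * (hA.eigenvectorUnitary : Matrix ι ι ℂ) = 1 :=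
    Matrix.mem_unitaryGroup_iff'.mp hA.eigenvectorUnitary.2
  conv_lhs => rw [hA.spectral_theorem, Unitary.conjStarAlgAut_apply]
  rw [Matrix.trace_mul_cycle, hU, one_mul, Matrix.trace_diagonal]
  push_cast
  rfl

lemma trace_mul_self_eq_sum_sq {A : Matrix ι ι ℂ} (hA : A.IsHermitian) :
    (A * A).trace = ((∑ i, hA.eigenvalues i ^ 2 : ℝ) : ℂ) := by
  set U : Matrix ι ι ℂ := (hA.eigenvectorUnitary : Matrix ι ι ℂ) with hUdef
  set d : ι → ℂ := RCLike.ofReal ∘ hA.eigenvalues with hddef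
  have hU : star U * U = 1 := Matrix.mem_unitaryGroup_iff'.mp hA.eigenvectorUnitary.2
  have key : A * A = U * (Matrix.diagonal d * Matrix.diagonal d) * star U := by
    conv_lhs => rw [hA.spectral_theorem, Unitary.conjStarAlgAut_apply]
    calc (U * Matrix.diagonal d * star U) * (U * Matrix.diagonal d * star U)
        = U * (Matrix.diagonal d * ((star U * U) * (Matrix.diagonal d * star U))) := by
          simp only [Matrix.mul_assoc]
      _ = U * (Matrix.diagonal d * Matrix.diagonal d) * star U := by
          rw [hU, one_mul]; simp only [Matrix.mul_assoc]
  rw [key, Matrix.trace_mul_cycle, hU, one_mul, Matrix.diagonal_mul_diagonal,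
    Matrix.trace_diagonal]
  push_cast
  simp [hddef, pow_two]

lemma sq_trace_le {A : Matrix ι ι ℂ} (hA : A.PosSemidef) {N : ℕ} (hrank : A.rank ≤ N) :
    (A.trace.re) ^ 2 ≤ N * ((A * A).trace.re) := by
  classical
  set f := hA.isHermitian.eigenvalues with hf
  have h1 : A.trace.re = ∑ i, f i := by
    rw [trace_eq_sum_eigs hA.isHermitian, Complex.ofReal_re]
  have h2 : (A * A).trace.re = ∑ i, f i ^ 2 := by
    rw [trace_mul_self_eq_sum_sq hA.isHermitian, Complex.ofReal_re]
  set s : Finset ι := Finset.univ.filter (fun i => f i ≠ 0) with hs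
  have hcard : s.card ≤ N := by
    have := hA.isHermitian.rank_eq_card_non_zero_eigs
    rw [this, Fintype.card_subtype] at hrank
    exact hrank
  calc (A.trace.re) ^ 2 = (∑ i ∈ s, 1 * f i) ^ 2 := by
        rw [h1, ← Finset.sum_filter_ne_zero]; simp [hs]
    _ ≤ (∑ i ∈ s, 1 ^ 2) * (∑ i ∈ s, f i ^ 2) := Finset.sum_mul_sq_le_sq_mul_sq _ _ _
    _ = s.card * ∑ i ∈ s, f i ^ 2 := by simp
    _ ≤ N * ∑ i, f i ^ 2 := by
        apply mul_le_mul (by exact_mod_cast hcard)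
          (Finset.sum_le_sum_of_subset_of_nonneg (Finset.filter_subset _ _)
            (fun i _ _ => sq_nonneg _))
          (Finset.sum_nonneg fun i _ => sq_nonneg _) (Nat.cast_nonneg _)
    _ = N * ((A * A).trace.re) := by rw [h2]

lemma ketbra_posSemidef {ψ : ι → ℂ} : (ketbra ψ).PosSemidef := by
  refine .of_dotProduct_mulVec_nonneg ?_ ?_
  · ext i j
    simp [ketbra, Matrix.vecMulVec_apply, Matrix.conjTranspose_apply, mul_comm]
  · intro x
    have h : (ketbra ψ) *ᵥ x = (star ψ ⬝ᵥ x) • ψ := by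
      ext i
      simp [ketbra, Matrix.mulVec, Matrix.vecMulVec_apply, dotProduct, Finset.mul_sum, mul_comm,
        mul_left_comm]
    rw [h, dotProduct_smul]
    have h2 : star x ⬝ᵥ ψ = star (star ψ ⬝ᵥ x) := by
      simp [dotProduct, Finset.sum_comm, mul_comm]
    rw [smul_eq_mul, mul_comm, h2]
    exact star_mul_self_nonneg _

lemma ketbra_mul_ketbra {ψ : ι → ℂ} (hψ : star ψ ⬝ᵥ ψ = 1) :
    ketbra ψ * ketbra ψ = ketbra ψ := by
  ext i j
  simp only [ketbra, Matrix.mul_apply, Matrix.vecMulVec_apply, Pi.star_apply]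
  calc ∑ k, ψ i * star (ψ k) * (ψ k * star (ψ j))
      = (ψ i * star (ψ j)) * ∑ k, star (ψ k) * ψ k := by
        rw [Finset.mul_sum]; exact Finset.sum_congr rfl fun k _ => by ring
    _ = ψ i * star (ψ j) := by
        have hψ' : ∑ k, star (ψ k) * ψ k = 1 := hψ
        rw [hψ', mul_one]

lemma trace_ketbra (ψ : ι → ℂ) : (ketbra ψ).trace = star ψ ⬝ᵥ ψ := by
  simp [ketbra, Matrix.trace, Matrix.diag, Matrix.vecMulVec_apply, dotProduct, mul_comm]

lemma trace_ketbra_mul (ψ : ι → ℂ) (ρ : Matrix ι ι ℂ) :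
    (ketbra ψ * ρ).trace = star ψ ⬝ᵥ ρ *ᵥ ψ := by
  simp only [Matrix.trace, Matrix.diag, Matrix.mul_apply, ketbra, Matrix.vecMulVec_apply,
    dotProduct, Matrix.mulVec, Pi.star_apply]
  rw [Finset.sum_comm]
  refine Finset.sum_congr rfl fun k _ => ?_
  rw [Finset.mul_sum]
  exact Finset.sum_congr rfl fun d _ => by ring

lemma ketbra_mul_mul_ketbra (ψ : ι → ℂ) (ρ : Matrix ι ι ℂ) :
    ketbra ψ * ρ * ketbra ψ = (star ψ ⬝ᵥ ρ *ᵥ ψ) • ketbra ψ := by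
  ext i j
  simp only [Matrix.mul_apply, ketbra, Matrix.vecMulVec_apply, Matrix.smul_apply,
    dotProduct, Matrix.mulVec, Pi.star_apply, smul_eq_mul, Finset.sum_mul, Finset.mul_sum]
  rw [Finset.sum_comm]
  exact Finset.sum_congr rfl fun k _ => Finset.sum_congr rfl fun l _ => by ring


lemma smul_ketbra_posSemidef {r : ℝ} (hr : 0 ≤ r) (ψ : ι → ℂ) :
    ((r : ℂ) • ketbra ψ).PosSemidef := by
  refine .of_dotProduct_mulVec_nonneg ?_ ?_
  · show ((r : ℂ) • ketbra ψ)ᴴ = (r : ℂ) • ketbra ψ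
    rw [Matrix.conjTranspose_smul, (ketbra_posSemidef (ψ := ψ)).isHermitian.eq,
      Complex.star_def, Complex.conj_ofReal]
  · intro x
    rw [Matrix.smul_mulVec, dotProduct_smul, smul_eq_mul]
    have h := (ketbra_posSemidef (ψ := ψ)).dotProduct_mulVec_nonneg x
    have hrc : (0:ℂ) ≤ (r : ℂ) := by exact_mod_cast hr
    exact mul_nonneg hrc h

lemma complex_eq_re_of_nonneg {c : ℂ} (hc : 0 ≤ c) : c = (c.re : ℂ) := by
  rw [Complex.le_def] at hc
  exact Complex.ext rfl (by simpa using hc.2.symm)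

lemma fid_ketbra {ρ : Matrix ι ι ℂ} (hρ : ρ.PosSemidef) {ψ : ι → ℂ}
    (hψ : star ψ ⬝ᵥ ψ = 1) :
    fid ρ (ketbra ψ) = (star ψ ⬝ᵥ ρ *ᵥ ψ).re := by
  set c : ℂ := star ψ ⬝ᵥ ρ *ᵥ ψ with hcdef
  have hc : 0 ≤ c := hρ.dotProduct_mulVec_nonneg ψ
  have hcre : 0 ≤ c.re := by
    rw [Complex.le_def] at hc; simpa using hc.1
  have hP : (ketbra ψ).PosSemidef := ketbra_posSemidef
  have hsP : matSqrt (ketbra ψ) = ketbra ψ :=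
    matSqrt_eq_of_sq hP hP (ketbra_mul_ketbra hψ)
  set X : Matrix ι ι ℂ := matSqrt ρ * ketbra ψ with hXdef
  have hXX : Xᴴ * X = c • ketbra ψ := by
    rw [hXdef, Matrix.conjTranspose_mul, (matSqrt_posSemidef hρ).isHermitian.eq,
      hP.isHermitian.eq]
    calc ketbra ψ * matSqrt ρ * (matSqrt ρ * ketbra ψ)
        = ketbra ψ * (matSqrt ρ * matSqrt ρ) * ketbra ψ := by
          simp only [Matrix.mul_assoc]
      _ = ketbra ψ * ρ * ketbra ψ := by rw [matSqrt_mul_self hρ]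
      _ = c • ketbra ψ := ketbra_mul_mul_ketbra ψ ρ
  set r : ℝ := Real.sqrt c.re with hrdef
  have habs : matAbs X = (r : ℂ) • ketbra ψ := by
    rw [matAbs, hXX]
    refine matSqrt_eq_of_sq (hXX ▸ Matrix.posSemidef_conjTranspose_mul_self X)
      (smul_ketbra_posSemidef (Real.sqrt_nonneg _) ψ) ?_
    rw [Matrix.smul_mul, Matrix.mul_smul, ketbra_mul_ketbra hψ, smul_smul]
    rw [show ((r:ℂ) * r) = ((r * r : ℝ) : ℂ) by push_cast; ring,
      Real.mul_self_sqrt hcre, ← complex_eq_re_of_nonneg hc]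
  have htr : (matAbs X).trace = (r : ℂ) := by
    rw [habs, Matrix.trace_smul, trace_ketbra ψ, hψ, smul_eq_mul, mul_one]
  rw [fid, hsP, ← hXdef, htr]
  simp only [Complex.ofReal_re]
  rw [hrdef, Real.sq_sqrt hcre]

end AuxLemmas

/-- rank inequality for the fidelity,
`F(ρ, Σᵢ pᵢ|ψᵢ⟩⟨ψᵢ|) ≤ N · maxᵢ F(ρ, |ψᵢ⟩⟨ψᵢ|)`. -/
theorem fidelity_rank_inequality (D : ℕ) (hD : 1 ≤ D) (N : ℕ) (hN : 1 ≤ N)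
    (ρ : Matrix (Fin D) (Fin D) ℂ) (hρ : IsDensity ρ)
    (ψ : Fin N → (Fin D → ℂ)) (hψ : ∀ i, star (ψ i) ⬝ᵥ ψ i = 1)
    (p : Fin N → ℝ) (hp : ∀ i, 0 ≤ p i) (hpsum : ∑ i, p i = 1)
    (σ : Matrix (Fin D) (Fin D) ℂ) (hσ : σ = ∑ i, (p i : ℂ) • ketbra (ψ i)) :
    fid ρ σ ≤ N * ⨆ i : Fin N, fid ρ (ketbra (ψ i)) := by
  classical
  have hρp : ρ.PosSemidef := hρ.1
  -- σ = B * Bᴴ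
  set B : Matrix (Fin D) (Fin N) ℂ :=
    Matrix.of (fun d i => (Real.sqrt (p i) : ℂ) * ψ i d) with hBdef
  have hσB : σ = B * Bᴴ := by
    rw [hσ]
    ext d d'
    rw [Matrix.mul_apply, Matrix.sum_apply]
    refine Finset.sum_congr rfl fun i _ => ?_
    simp only [Matrix.smul_apply, ketbra, Matrix.vecMulVec_apply, Pi.star_apply,
      Matrix.conjTranspose_apply, hBdef, Matrix.of_apply, smul_eq_mul, star_mul',
      Complex.star_def, Complex.conj_ofReal]
    have : ((Real.sqrt (p i) : ℂ)) * (Real.sqrt (p i) : ℂ) = ((p i : ℝ) : ℂ) := by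
      rw [← Complex.ofReal_mul, Real.mul_self_sqrt (hp i)]
    ring_nf
    rw [show ((Real.sqrt (p i) : ℂ)) ^ 2 = ((p i : ℝ) : ℂ) by rw [sq]; exact this]
    ring
  have hσpsd : σ.PosSemidef := by
    rw [hσB]; exact Matrix.posSemidef_self_mul_conjTranspose B
  have hσrank : σ.rank ≤ N := by
    rw [hσB]
    exact (Matrix.rank_mul_le_left B Bᴴ).trans
      (B.rank_le_card_width.trans (by simp))
  set X : Matrix (Fin D) (Fin D) ℂ := matSqrt ρ * matSqrt σ with hXdef
  set A : Matrix (Fin D) (Fin D) ℂ := matAbs X with hAdef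
  have hArank : A.rank ≤ N := by
    rw [hAdef, rank_matAbs]
    exact (Matrix.rank_mul_le_right _ _).trans (by rw [rank_matSqrt hσpsd]; exact hσrank)
  have hstep1 : (A.trace.re) ^ 2 ≤ N * ((A * A).trace.re) :=
    sq_trace_le (matAbs_posSemidef X) hArank
  have hAA : A * A = Xᴴ * X := matAbs_mul_self X
  have hXX : (Xᴴ * X).trace = (σ * ρ).trace := by
    have h1 : Xᴴ * X = matSqrt σ * ρ * matSqrt σ := by
      rw [hXdef, Matrix.conjTranspose_mul, (matSqrt_posSemidef hρp).isHermitian.eq,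
        (matSqrt_posSemidef hσpsd).isHermitian.eq]
      calc matSqrt σ * matSqrt ρ * (matSqrt ρ * matSqrt σ)
          = matSqrt σ * (matSqrt ρ * matSqrt ρ) * matSqrt σ := by
            simp only [Matrix.mul_assoc]
        _ = matSqrt σ * ρ * matSqrt σ := by rw [matSqrt_mul_self hρp]
    rw [h1, Matrix.trace_mul_cycle, matSqrt_mul_self hσpsd]
  have htrσρ : (σ * ρ).trace = ∑ i, (p i : ℂ) * (star (ψ i) ⬝ᵥ ρ *ᵥ ψ i) := by
    rw [hσ, Matrix.sum_mul, Matrix.trace_sum]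
    refine Finset.sum_congr rfl fun i _ => ?_
    rw [Matrix.smul_mul, Matrix.trace_smul, trace_ketbra_mul, smul_eq_mul]
  -- the supremum
  have : Nonempty (Fin N) := ⟨⟨0, hN⟩⟩
  set S : ℝ := ⨆ i : Fin N, fid ρ (ketbra (ψ i)) with hSdef
  have hle : ∀ i, fid ρ (ketbra (ψ i)) ≤ S := fun i =>
    le_ciSup (f := fun j => fid ρ (ketbra (ψ j))) (Set.Finite.bddAbove (Set.finite_range _)) i
  have hsum_le : ((σ * ρ).trace).re ≤ S := by
    rw [htrσρ]
    have hre : (∑ i, (p i : ℂ) * (star (ψ i) ⬝ᵥ ρ *ᵥ ψ i)).re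
        = ∑ i, p i * (star (ψ i) ⬝ᵥ ρ *ᵥ ψ i).re := by
      rw [Complex.re_sum]
      exact Finset.sum_congr rfl fun i _ => by rw [Complex.re_ofReal_mul]
    rw [hre]
    calc ∑ i, p i * (star (ψ i) ⬝ᵥ ρ *ᵥ ψ i).re
        = ∑ i, p i * fid ρ (ketbra (ψ i)) := by
          refine Finset.sum_congr rfl fun i _ => ?_
          rw [fid_ketbra hρp (hψ i)]
      _ ≤ ∑ i, p i * S := Finset.sum_le_sum fun i _ =>
          mul_le_mul_of_nonneg_left (hle i) (hp i)
      _ = S := by rw [← Finset.sum_mul, hpsum, one_mul]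
  calc fid ρ σ = (A.trace.re) ^ 2 := rfl
    _ ≤ N * ((A * A).trace.re) := hstep1
    _ = N * ((σ * ρ).trace).re := by rw [hAA, hXX]
    _ ≤ N * S := mul_le_mul_of_nonneg_left hsum_le (Nat.cast_nonneg N)
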